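/- Fix d ∈ (0,2) and let ζ(y) = ∫_ℝ (cosh(xy) − 1)·e^{−x²/2} · C_d/|x|^{d+1} dx with C_d = d·2^{d/2−1}/Γ(1−d/2). Then ∫_ℝ φ(y)·ζ(y) dy = 1, where φ(y) = e^{−y²/2}/√(2π) is the standard Gaussian density. In particular ψ(y) = φ(y)·ζ(y) is a probability density on ℝ. -/

import Mathlib

open MeasureTheory Real Set Filter Topology

lemma my_cosh_sub_one_le (t : ℝ) : Real.cosh t - 1 ≤ t ^ 2 * Real.cosh t := by
  have key : ∀ s : ℝ, 0 ≤ s → Real.cosh s - 1 ≤ s ^ 2 * Real.cosh s := by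
    intro s hs
    have hm : Real.exp (-s) * Real.exp s = 1 := by
      rw [← Real.exp_add]; simp
    have h1 : Real.exp s - 1 ≤ s * Real.exp s := by
      nlinarith [Real.add_one_le_exp (-s), Real.exp_pos s]
    have h2 : 1 - Real.exp (-s) ≤ s := by linarith [Real.add_one_le_exp (-s)]
    have h3 : 0 ≤ Real.exp s - 1 := by nlinarith [Real.add_one_le_exp s]
    have h4 : 0 ≤ 1 - Real.exp (-s) := by
      have : Real.exp (-s) ≤ Real.exp 0 := Real.exp_le_exp.mpr (by linarith)
      simpa using this
    have hc : Real.cosh s - 1 = (Real.exp s - 1) * (1 - Real.exp (-s)) / 2 := by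
      rw [Real.cosh_eq]; ring_nf; nlinarith [hm]
    nlinarith [mul_le_mul h1 h2 h4 (by positivity : (0:ℝ) ≤ s * Real.exp s),
      Real.exp_pos (-s), Real.cosh_eq s, Real.exp_pos s, sq_nonneg s]
  rcases le_total 0 t with h | h
  · exact key t h
  · simpa [neg_sq, Real.cosh_neg] using key (-t) (by linarith)
lemma my_gauss_shift_integrable (a : ℝ) :
    Integrable fun y : ℝ => Real.exp (-y ^ 2 / 2) * Real.exp (a * y) := by
  have h0 : Integrable fun y : ℝ => Real.exp (-(1/2) * y ^ 2) :=
    integrable_exp_neg_mul_sq (by norm_num)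
  have h1 : Integrable fun y : ℝ => Real.exp (-(1/2) * (y - a) ^ 2) := h0.comp_sub_right a
  refine (h1.const_mul (Real.exp (a ^ 2 / 2))).congr
    (Filter.Eventually.of_forall fun y => ?_)
  simp only [← Real.exp_add]
  ring_nf

lemma my_gauss_shift (a : ℝ) :
    ∫ y : ℝ, Real.exp (-y ^ 2 / 2) * Real.exp (a * y)
      = Real.sqrt (2 * π) * Real.exp (a ^ 2 / 2) := by
  have h1 : ∀ y : ℝ, Real.exp (-y ^ 2 / 2) * Real.exp (a * y)
      = Real.exp (a ^ 2 / 2) * Real.exp (-(1/2) * (y - a) ^ 2) := by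
    intro y; rw [← Real.exp_add, ← Real.exp_add]; ring_nf
  simp_rw [h1]
  rw [MeasureTheory.integral_const_mul,
    integral_sub_right_eq_self (μ := volume) (fun y => Real.exp (-(1/2) * y ^ 2)) a,
    integral_gaussian, mul_comm]
  congr 1
  rw [show π / (1/2 : ℝ) = 2 * π by ring]

lemma my_gauss_norm : ∫ y : ℝ, Real.exp (-y ^ 2 / 2) = Real.sqrt (2 * π) := by
  have := integral_gaussian (1/2 : ℝ)
  simp_rw [show ∀ y : ℝ, -(1/2 : ℝ) * y ^ 2 = -y ^ 2 / 2 by intro y; ring] at this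
  rw [this, show π / (1/2 : ℝ) = 2 * π by ring]

lemma my_gauss_integrable : Integrable fun y : ℝ => Real.exp (-y ^ 2 / 2) := by
  have h0 : Integrable fun y : ℝ => Real.exp (-(1/2) * y ^ 2) :=
    integrable_exp_neg_mul_sq (by norm_num)
  refine h0.congr (Filter.Eventually.of_forall fun y => ?_); ring_nf

lemma my_sum_integrable (a : ℝ) : Integrable fun y : ℝ =>
    (Real.exp (-y ^ 2 / 2) * Real.exp (a * y)
      + Real.exp (-y ^ 2 / 2) * Real.exp (-a * y)) / 2 :=
  (((my_gauss_shift_integrable a).add (my_gauss_shift_integrable (-a))).div_const 2).congr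
    (Filter.Eventually.of_forall fun y => by simp [Pi.add_apply])

lemma my_cosh_gauss_int (a : ℝ) :
    Integrable fun y : ℝ => Real.exp (-y ^ 2 / 2) * (Real.cosh (a * y) - 1) := by
  refine ((my_sum_integrable a).sub my_gauss_integrable).congr
    (Filter.Eventually.of_forall fun y => ?_)
  simp only [Pi.sub_apply, Real.cosh_eq]
  ring_nf

lemma my_cosh_gauss (a : ℝ) :
    ∫ y : ℝ, Real.exp (-y ^ 2 / 2) * (Real.cosh (a * y) - 1)
      = Real.sqrt (2 * π) * (Real.exp (a ^ 2 / 2) - 1) := by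
  have h1 : ∀ y : ℝ, Real.exp (-y ^ 2 / 2) * (Real.cosh (a * y) - 1)
      = (Real.exp (-y ^ 2 / 2) * Real.exp (a * y)
          + Real.exp (-y ^ 2 / 2) * Real.exp (-a * y)) / 2
        - Real.exp (-y ^ 2 / 2) := by
    intro y; rw [Real.cosh_eq]; ring_nf
  simp_rw [h1]
  rw [integral_sub (my_sum_integrable a) my_gauss_integrable, integral_div,
    integral_add (my_gauss_shift_integrable a) (my_gauss_shift_integrable (-a)),
    my_gauss_shift, my_gauss_shift, my_gauss_norm, show (-a) ^ 2 = a ^ 2 by ring]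
  ring
lemma my_rpow_gauss_integrable {d : ℝ} (hd2 : d < 2) :
    IntegrableOn (fun x : ℝ => x ^ (1 - d) * Real.exp (-x ^ 2 / 2)) (Ioi 0) := by
  have := integrableOn_rpow_mul_exp_neg_mul_sq (b := 1/2) (by norm_num) (s := 1 - d)
    (by linarith)
  refine this.congr_fun (fun x _ => ?_) measurableSet_Ioi
  congr 1; ring

lemma my_rpow_gauss_val {d : ℝ} (hd : 0 < d) (hd2 : d < 2) :
    ∫ x in Ioi (0:ℝ), x ^ (1 - d) * Real.exp (-x ^ 2 / 2)
      = 2 ^ (-d/2) * Real.Gamma (1 - d/2) := by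
  have key := integral_rpow_mul_exp_neg_mul_rpow (p := 2) (q := 1 - d) (b := 1/2)
    (by norm_num) (by linarith) (by norm_num)
  have h1 : ∀ x ∈ Ioi (0:ℝ), x ^ (1 - d) * Real.exp (-(1/2) * x ^ (2:ℝ))
      = x ^ (1 - d) * Real.exp (-x ^ 2 / 2) := by
    intro x hx
    rw [show (2:ℝ) = ((2:ℕ):ℝ) by norm_num, Real.rpow_natCast]
    congr 1; ring
  rw [setIntegral_congr_fun measurableSet_Ioi h1] at key
  rw [key]
  have h2 : ((1:ℝ)/2) ^ (-(1 - d + 1) / 2) = 2 ^ ((2 - d)/2) := by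
    rw [show ((1:ℝ)/2) = 2⁻¹ by norm_num, ← Real.rpow_neg_one (2:ℝ),
      ← Real.rpow_mul (by norm_num)]
    congr 1; ring
  rw [h2, show (1 - d + 1) / 2 = 1 - d/2 by ring]
  rw [show (2:ℝ) ^ ((2 - d)/2) * (1/2) = 2 ^ ((2-d)/2) * 2 ^ (-1:ℝ) by norm_num [Real.rpow_neg_one],
    ← Real.rpow_add (by norm_num), show (2 - d)/2 + (-1:ℝ) = -d/2 by ring]
lemma my_target_meas {d : ℝ} :
    Measurable fun x : ℝ => (1 - Real.exp (-x ^ 2 / 2)) / x ^ (d + 1) := by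
  fun_prop

lemma my_target_nonneg {d : ℝ} (x : ℝ) (hx : 0 ≤ x) :
    0 ≤ (1 - Real.exp (-x ^ 2 / 2)) / x ^ (d + 1) := by
  apply div_nonneg _ (by positivity)
  have : Real.exp (-x ^ 2 / 2) ≤ 1 := Real.exp_le_one_iff.mpr (by nlinarith [sq_nonneg x])
  linarith

lemma my_target_integrableOn {d : ℝ} (hd : 0 < d) (hd2 : d < 2) :
    IntegrableOn (fun x : ℝ => (1 - Real.exp (-x ^ 2 / 2)) / x ^ (d + 1)) (Ioi 0) := by
  have h01 : IntegrableOn (fun x : ℝ => (1 - Real.exp (-x ^ 2 / 2)) / x ^ (d + 1)) (Ioc 0 1) := by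
    have hbig : IntegrableOn (fun x : ℝ => x ^ (1 - d)) (Ioc 0 1) := by
      have := intervalIntegral.intervalIntegrable_rpow' (a := 0) (b := 1)
        (r := 1 - d) (by linarith)
      rwa [intervalIntegrable_iff_integrableOn_Ioc_of_le (by norm_num)] at this
    refine Integrable.mono' hbig my_target_meas.aestronglyMeasurable.restrict ?_
    filter_upwards [ae_restrict_mem measurableSet_Ioc] with x hx
    obtain ⟨hx0, _⟩ := hx
    rw [Real.norm_eq_abs, abs_of_nonneg (my_target_nonneg x hx0.le)]
    rw [div_le_iff₀ (by positivity), ← Real.rpow_add hx0]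
    calc 1 - Real.exp (-x ^ 2 / 2) ≤ x ^ 2 / 2 := by
          nlinarith [Real.add_one_le_exp (-x ^ 2 / 2)]
      _ ≤ x ^ (1 - d + (d + 1)) := by
          rw [show 1 - d + (d + 1) = (2:ℝ) by ring,
            show (2:ℝ) = ((2:ℕ):ℝ) by norm_num, Real.rpow_natCast]
          nlinarith [sq_nonneg x]
  have h1i : IntegrableOn (fun x : ℝ => (1 - Real.exp (-x ^ 2 / 2)) / x ^ (d + 1)) (Ioi 1) := by
    have hbig : IntegrableOn (fun x : ℝ => x ^ (-(d + 1))) (Ioi 1) :=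
      integrableOn_Ioi_rpow_of_lt (by linarith) one_pos
    refine Integrable.mono' hbig my_target_meas.aestronglyMeasurable.restrict ?_
    filter_upwards [ae_restrict_mem measurableSet_Ioi] with x hx
    have hx0 : (0:ℝ) < x := lt_trans one_pos hx
    rw [Real.norm_eq_abs, abs_of_nonneg (my_target_nonneg x hx0.le), Real.rpow_neg hx0.le,
      ← one_div]
    gcongr
    linarith [Real.exp_pos (-x ^ 2 / 2)]
  rw [show Ioi (0:ℝ) = Ioc 0 1 ∪ Ioi 1 from (Ioc_union_Ioi_eq_Ioi (by norm_num)).symm]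
  exact h01.union h1i
lemma my_target_val {d : ℝ} (hd : 0 < d) (hd2 : d < 2) :
    ∫ x in Ioi (0:ℝ), (1 - Real.exp (-x ^ 2 / 2)) / x ^ (d + 1)
      = 2 ^ (-d/2) * Real.Gamma (1 - d/2) / d := by
  set g : ℝ → ℝ := fun x => (-(1/d)) * (x ^ (-d) * (1 - Real.exp (-x ^ 2 / 2))) with hg
  set f' : ℝ → ℝ := fun x => (1 - Real.exp (-x ^ 2 / 2)) / x ^ (d + 1)
      - (1/d) * (x ^ (1 - d) * Real.exp (-x ^ 2 / 2)) with hf'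
  have hdne : d ≠ 0 := hd.ne'
  -- derivative
  have hderiv : ∀ x ∈ Ioi (0:ℝ), HasDerivAt g (f' x) x := by
    intro x hx
    have hx0 : (0:ℝ) < x := hx
    have u : HasDerivAt (fun x : ℝ => x ^ (-d)) (-d * x ^ (-d - 1)) x :=
      Real.hasDerivAt_rpow_const (Or.inl hx0.ne')
    have inner : HasDerivAt (fun x : ℝ => -x ^ 2 / 2) (-x) x := by
      have h := ((hasDerivAt_pow 2 x).neg.div_const 2)
      refine h.congr_deriv ?_
      push_cast; ring
    have v : HasDerivAt (fun x : ℝ => 1 - Real.exp (-x ^ 2 / 2))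
        (x * Real.exp (-x ^ 2 / 2)) x := by
      have := (inner.exp).const_sub 1
      refine this.congr_deriv ?_
      ring
    have prod := (u.mul v).const_mul (-(1/d))
    refine prod.congr_deriv ?_
    have e1 : x ^ (-d - 1) = (x ^ (d + 1))⁻¹ := by
      rw [← Real.rpow_neg hx0.le]; congr 1; ring
    have e2 : x ^ (1 - d) = x ^ (-d) * x := by
      rw [show (1:ℝ) - d = -d + 1 by ring, Real.rpow_add hx0, Real.rpow_one]
    simp only [hf']
    rw [e1, e2]
    have hxp : x ^ (d + 1) ≠ 0 := by positivity
    field_simp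
    ring
  -- limit at infinity
  have htop : Tendsto g atTop (𝓝 0) := by
    have t1 : Tendsto (fun x : ℝ => x ^ (-d)) atTop (𝓝 0) := tendsto_rpow_neg_atTop hd
    have tsq : Tendsto (fun x : ℝ => -x ^ 2 / 2) atTop atBot := by
      have h1 : Tendsto (fun x : ℝ => x ^ 2 / 2) atTop atTop :=
        (tendsto_pow_atTop (two_ne_zero)).atTop_div_const (by norm_num)
      refine (tendsto_neg_atTop_atBot.comp h1).congr fun x => ?_
      simp only [Function.comp_apply]
      ring
    have t2 : Tendsto (fun x : ℝ => 1 - Real.exp (-x ^ 2 / 2)) atTop (𝓝 1) := by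
      have := Real.tendsto_exp_atBot.comp tsq
      simpa using tendsto_const_nhds.sub this
    have h3 := (t1.mul t2).const_mul (-(1/d))
    rw [show (-(1/d)) * (0 * 1) = (0:ℝ) from by ring] at h3
    exact h3
  -- continuity at 0 from the right
  have hg0 : g 0 = 0 := by
    simp [hg, Real.zero_rpow (neg_ne_zero.mpr hdne)]
  have hcont : ContinuousWithinAt g (Ici 0) 0 := by
    rw [ContinuousWithinAt, hg0]
    have hb : Tendsto (fun x : ℝ => (1/d) * x ^ (2 - d)) (𝓝[Ici 0] 0) (𝓝 0) := by
      have hc : ContinuousAt (fun x : ℝ => x ^ (2 - d)) 0 :=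
        Real.continuousAt_rpow_const 0 (2 - d) (Or.inr (by linarith))
      have h4 : Tendsto (fun x : ℝ => x ^ (2 - d)) (nhdsWithin 0 (Ici 0)) (𝓝 (0 ^ (2 - d))) :=
        hc.continuousWithinAt
      rw [Real.zero_rpow (show (2:ℝ) - d ≠ 0 by intro hc'; linarith)] at h4
      simpa using h4.const_mul (1/d)
    apply squeeze_zero_norm' ?_ hb
    · filter_upwards [self_mem_nhdsWithin] with x (hx : x ∈ Ici 0)
      rcases eq_or_lt_of_le (show (0:ℝ) ≤ x from hx) with h | h
      · simp [hg, ← h, Real.zero_rpow (neg_ne_zero.mpr hdne),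
          Real.zero_rpow (show (2:ℝ) - d ≠ 0 by intro hc; linarith)]
      · have he : Real.exp (-x ^ 2 / 2) ≤ 1 := Real.exp_le_one_iff.mpr (by nlinarith)
        have h1 : 1 - Real.exp (-x ^ 2 / 2) ≤ x ^ 2 := by
          nlinarith [Real.add_one_le_exp (-x ^ 2 / 2)]
        have e3 : x ^ (-d) * x ^ 2 = x ^ (2 - d) := by
          rw [show x ^ 2 = x ^ ((2:ℕ):ℝ) by rw [Real.rpow_natCast],
            ← Real.rpow_add h]
          congr 1; push_cast; ring
        rw [hg, norm_mul, norm_mul, Real.norm_eq_abs, Real.norm_eq_abs, Real.norm_eq_abs,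
          abs_of_nonneg (by positivity : (0:ℝ) ≤ x ^ (-d)),
          abs_of_nonneg (by linarith : (0:ℝ) ≤ 1 - Real.exp (-x ^ 2 / 2))]
        have : |(-(1/d))| = 1/d := by rw [abs_neg, abs_of_pos (by positivity)]
        rw [this, ← e3]
        have hxd : (0:ℝ) ≤ x ^ (-d) := by positivity
        nlinarith [mul_le_mul_of_nonneg_left h1 hxd, (by positivity : (0:ℝ) < 1/d)]
  have f'int : IntegrableOn f' (Ioi 0) :=
    (my_target_integrableOn hd hd2).sub ((my_rpow_gauss_integrable hd2).const_mul (1/d))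
  have key := integral_Ioi_of_hasDerivAt_of_tendsto hcont hderiv f'int htop
  rw [hg0, sub_zero] at key
  have split : ∫ x in Ioi (0:ℝ), (1 - Real.exp (-x ^ 2 / 2)) / x ^ (d + 1)
      = (∫ x in Ioi (0:ℝ), f' x)
        + ∫ x in Ioi (0:ℝ), (1/d) * (x ^ (1 - d) * Real.exp (-x ^ 2 / 2)) := by
    rw [← integral_add f'int ((my_rpow_gauss_integrable hd2).const_mul (1/d))]
    congr 1
    funext x
    rw [hf']
    ring
  rw [split, key, MeasureTheory.integral_const_mul, my_rpow_gauss_val hd hd2]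
  ring
lemma my_full_integrable {d : ℝ} (hd : 0 < d) (hd2 : d < 2) :
    Integrable fun x : ℝ => (1 - Real.exp (-x ^ 2 / 2)) / |x| ^ (d + 1) := by
  have hIoi : IntegrableOn (fun x : ℝ => (1 - Real.exp (-x ^ 2 / 2)) / |x| ^ (d + 1))
      (Ioi 0) := by
    refine (my_target_integrableOn hd hd2).congr_fun (fun x hx => ?_) measurableSet_Ioi
    rw [abs_of_pos (hx : (0:ℝ) < x)]
  have hIic : IntegrableOn (fun x : ℝ => (1 - Real.exp (-x ^ 2 / 2)) / |x| ^ (d + 1))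
      (Iic 0) := by
    rw [← Measure.map_neg_eq_self (volume : Measure ℝ)]
    have m : MeasurableEmbedding fun x : ℝ => -x := (Homeomorph.neg ℝ).measurableEmbedding
    rw [m.integrableOn_map_iff]
    simp_rw [Function.comp_def, abs_neg, neg_sq, neg_preimage, neg_Iic, neg_zero]
    exact Iff.mpr integrableOn_Ici_iff_integrableOn_Ioi hIoi
  rw [← integrableOn_univ, ← Iic_union_Ioi (a := (0:ℝ))]
  exact hIic.union hIoi

lemma my_full_val {d : ℝ} (hd : 0 < d) (hd2 : d < 2) :
    ∫ x : ℝ, (1 - Real.exp (-x ^ 2 / 2)) / |x| ^ (d + 1)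
      = 2 ^ (1 - d/2) * Real.Gamma (1 - d/2) / d := by
  have key := integral_comp_abs (f := fun x : ℝ => (1 - Real.exp (-x ^ 2 / 2)) / x ^ (d + 1))
  simp_rw [sq_abs] at key
  rw [key, my_target_val hd hd2]
  rw [show (2:ℝ) * (2 ^ (-d/2) * Real.Gamma (1 - d/2) / d)
      = (2 ^ (1:ℝ) * 2 ^ (-d/2)) * Real.Gamma (1 - d/2) / d by rw [Real.rpow_one]; ring,
    ← Real.rpow_add two_pos, show (1:ℝ) + -d/2 = 1 - d/2 by ring]

/-- For `0 < d < 2`, the zeta function `ζ` of the inverse-power exceedance measure `H_d`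
satisfies `∫ φ(y) ζ(y) dy = 1`, where `φ` is the standard Gaussian density; hence
`ψ = φ·ζ` is a probability density. -/
theorem gaussian_zeta_integral_one (d : ℝ) (hd : d ∈ Set.Ioo (0 : ℝ) 2) :
    ∫ y : ℝ, (Real.exp (-y ^ 2 / 2) / Real.sqrt (2 * π)) *
      ∫ x : ℝ, (Real.cosh (x * y) - 1) * Real.exp (-x ^ 2 / 2) *
        (d * 2 ^ (d / 2 - 1) / Real.Gamma (1 - d / 2) / |x| ^ (d + 1)) = 1 := by
  obtain ⟨hd0, hd2⟩ := hd
  have hΓ : 0 < Real.Gamma (1 - d / 2) := Real.Gamma_pos_of_pos (by linarith)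
  have hsπ : (0:ℝ) < Real.sqrt (2 * π) := Real.sqrt_pos.mpr (by positivity)
  set C : ℝ := d * 2 ^ (d / 2 - 1) / Real.Gamma (1 - d / 2) with hC
  have hCpos : 0 < C := by
    apply div_pos _ hΓ
    positivity
  set F : ℝ → ℝ → ℝ := fun x y => (Real.exp (-y ^ 2 / 2) / Real.sqrt (2 * π)) *
      ((Real.cosh (x * y) - 1) * Real.exp (-x ^ 2 / 2) * (C / |x| ^ (d + 1))) with hF
  -- pull the Gaussian density inside the inner integral
  have step1 : (∫ y : ℝ, (Real.exp (-y ^ 2 / 2) / Real.sqrt (2 * π)) *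
      ∫ x : ℝ, (Real.cosh (x * y) - 1) * Real.exp (-x ^ 2 / 2) *
        (C / |x| ^ (d + 1))) = ∫ y : ℝ, ∫ x : ℝ, F x y := by
    congr 1
    funext y
    exact (MeasureTheory.integral_const_mul _ _).symm
  rw [show (fun y : ℝ => (Real.exp (-y ^ 2 / 2) / Real.sqrt (2 * π)) *
      ∫ x : ℝ, (Real.cosh (x * y) - 1) * Real.exp (-x ^ 2 / 2) *
        (d * 2 ^ (d / 2 - 1) / Real.Gamma (1 - d / 2) / |x| ^ (d + 1)))
    = fun y : ℝ => (Real.exp (-y ^ 2 / 2) / Real.sqrt (2 * π)) *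
      ∫ x : ℝ, (Real.cosh (x * y) - 1) * Real.exp (-x ^ 2 / 2) *
        (C / |x| ^ (d + 1)) from rfl, step1]
  -- slice integrability in y, and the value of the y-integral
  have hslice : ∀ x : ℝ, Integrable (fun y => F x y) := by
    intro x
    have := (my_cosh_gauss_int x).const_mul
      (Real.exp (-x ^ 2 / 2) * (C / |x| ^ (d + 1)) / Real.sqrt (2 * π))
    refine this.congr (Filter.Eventually.of_forall fun y => ?_)
    rw [hF]; ring
  have hinner : ∀ x : ℝ, (∫ y : ℝ, F x y)
      = C * ((1 - Real.exp (-x ^ 2 / 2)) / |x| ^ (d + 1)) := by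
    intro x
    have h1 : ∀ y : ℝ, F x y = (Real.exp (-x ^ 2 / 2) * (C / |x| ^ (d + 1))
        / Real.sqrt (2 * π)) * (Real.exp (-y ^ 2 / 2) * (Real.cosh (x * y) - 1)) := by
      intro y; rw [hF]; ring
    simp_rw [h1]
    rw [MeasureTheory.integral_const_mul, my_cosh_gauss x]
    have hx2 : Real.exp (-x ^ 2 / 2) * (Real.exp (x ^ 2 / 2) - 1)
        = 1 - Real.exp (-x ^ 2 / 2) := by
      rw [mul_sub, ← Real.exp_add, mul_one, show -x ^ 2 / 2 + x ^ 2 / 2 = (0:ℝ) by ring,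
        Real.exp_zero]
    rw [show Real.exp (-x ^ 2 / 2) * (C / |x| ^ (d + 1)) / Real.sqrt (2 * π) *
          (Real.sqrt (2 * π) * (Real.exp (x ^ 2 / 2) - 1))
        = (Real.exp (-x ^ 2 / 2) * (Real.exp (x ^ 2 / 2) - 1)) * (C / |x| ^ (d + 1)) *
          (Real.sqrt (2 * π) / Real.sqrt (2 * π)) by ring,
      div_self hsπ.ne', mul_one, hx2]
    ring
  -- nonnegativity
  have hFnn : ∀ x y : ℝ, 0 ≤ F x y := by
    intro x y
    rw [hF]
    have h1 : (0:ℝ) ≤ Real.cosh (x * y) - 1 := by linarith [Real.one_le_cosh (x * y)]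
    positivity
  -- product integrability
  have hmeasF : AEStronglyMeasurable (Function.uncurry F) (volume.prod volume) := by
    apply Measurable.aestronglyMeasurable
    fun_prop
  have hprod : Integrable (Function.uncurry F) (volume.prod volume) := by
    rw [MeasureTheory.integrable_prod_iff hmeasF]
    constructor
    · exact Filter.Eventually.of_forall fun x => hslice x
    · have := (my_full_integrable hd0 hd2).const_mul C
      refine this.congr (Filter.Eventually.of_forall fun x => ?_)
      have : ∀ y : ℝ, ‖F x y‖ = F x y := fun y => abs_of_nonneg (hFnn x y)
      simp_rw [Function.uncurry_apply_pair, this, hinner x]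
  -- swap and compute
  rw [← MeasureTheory.integral_integral_swap hprod]
  simp_rw [hinner]
  rw [MeasureTheory.integral_const_mul, my_full_val hd0 hd2]
  have h2 : (2:ℝ) ^ (d / 2 - 1) * 2 ^ (1 - d / 2) = 1 := by
    rw [← Real.rpow_add two_pos]; norm_num
  rw [hC]
  rw [show d * 2 ^ (d / 2 - 1) / Real.Gamma (1 - d / 2)
        * (2 ^ (1 - d / 2) * Real.Gamma (1 - d / 2) / d)
      = (2 ^ (d / 2 - 1) * 2 ^ (1 - d / 2))
        * (Real.Gamma (1 - d / 2) / Real.Gamma (1 - d / 2)) * (d / d) by ring,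
    h2, div_self hΓ.ne', div_self hd0.ne', one_mul, mul_one]
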